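/- Let ρ be a probability measure on the set of partitions with at most N parts, and let x_1,…,x_N be nonzero parameters. Define the Schur generating function S_ρ(u_1,…,u_N) = Σ_λ ρ(λ) s_λ(u_1,…,u_N)/s_λ(x_1,…,x_N). Then for any positive integers k and l, applying the operator D_k (with Vandermonde conjugation) l times to S_ρ and evaluating at (u_1,…,u_N) = (x_1,…,x_N) yields E_ρ[(Σ_{i=1}^N (λ_i + N − i)^k)^l]. -/

import Mathlib

open scoped BigOperators

/-- The complete homogeneous symmetric function `h_r` in `N` complex variables. -/
noncomputable def hsym (N : ℕ) (x : Fin N → ℂ) (r : ℕ) : ℂ :=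
  ∑ m : Fin N → Fin (r + 1),
    if (∑ i, (m i : ℕ)) = r then ∏ i, x i ^ (m i : ℕ) else 0

/-- `h_k` for an integer index `k`, equal to `0` for negative `k`. -/
noncomputable def hsymZ (N : ℕ) (x : Fin N → ℂ) (z : ℤ) : ℂ :=
  if z < 0 then 0 else hsym N x z.toNat

/-- The Schur polynomial `s_λ(x_1,…,x_N)` via the Jacobi–Trudi formula. -/
noncomputable def schur (N : ℕ) (lam : Fin N → ℕ) (x : Fin N → ℂ) : ℂ :=
  Matrix.det (Matrix.of fun i j : Fin N =>
    hsymZ N x ((lam i : ℤ) + (j : ℤ) - (i : ℤ)))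

/-- The Vandermonde determinant `V(u) = ∏_{i<j} (u_i − u_j)`. -/
noncomputable def vand (N : ℕ) (u : Fin N → ℂ) : ℂ :=
  ∏ p ∈ Finset.univ.filter (fun p : Fin N × Fin N => p.1 < p.2), (u p.1 - u p.2)

/-- The Euler operator `u_j ∂/∂u_j` acting on functions of `N` complex variables. -/
noncomputable def eulerOp (N : ℕ) (j : Fin N) (f : (Fin N → ℂ) → ℂ) :
    (Fin N → ℂ) → ℂ :=
  fun u => u j * deriv (fun t : ℂ => f (Function.update u j t)) (u j)

/-- The operator `D_k f = V⁻¹ (Σ_j (u_j ∂/∂u_j)^k) (V · f)`. -/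
noncomputable def Dop (N k : ℕ) (f : (Fin N → ℂ) → ℂ) : (Fin N → ℂ) → ℂ :=
  fun u => (vand N u)⁻¹ *
    ∑ j : Fin N, (eulerOp N j)^[k] (fun v => vand N v * f v) u

/-- The Schur generating function `S_ρ(u) = Σ_λ ρ(λ) s_λ(u)/s_λ(x)` of a finitely
supported measure `ρ` on partitions with at most `N` parts. -/
noncomputable def SGF (N : ℕ) (S : Finset (Fin N → ℕ)) (ρ : (Fin N → ℕ) → ℝ)
    (x : Fin N → ℂ) : (Fin N → ℂ) → ℂ :=
  fun u => ∑ lam ∈ S, (ρ lam : ℂ) * schur N lam u / schur N lam x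


open Finset PowerSeries in
noncomputable def Gser (a : ℂ) : PowerSeries ℂ := PowerSeries.mk (fun n => a ^ n)

lemma one_sub_mul_Gser (a : ℂ) : (1 - PowerSeries.C a * PowerSeries.X) * Gser a = 1 := by
  ext n
  rw [sub_mul, one_mul, mul_assoc, map_sub]
  cases n with
  | zero => simp [Gser]
  | succ m =>
    simp [Gser, PowerSeries.coeff_C_mul, PowerSeries.coeff_succ_X_mul,
      PowerSeries.coeff_mk, PowerSeries.coeff_one, pow_succ, mul_comm]

noncomputable def Eser {N : ℕ} (u : Fin N → ℂ) (s : Finset (Fin N)) : PowerSeries ℂ :=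
  ∏ i ∈ s, (1 - PowerSeries.C (u i) * PowerSeries.X)

noncomputable def Hser {N : ℕ} (u : Fin N → ℂ) (s : Finset (Fin N)) : PowerSeries ℂ :=
  ∏ i ∈ s, Gser (u i)

lemma Eser_mul_Hser {N : ℕ} (u : Fin N → ℂ) (s : Finset (Fin N)) :
    Eser u s * Hser u s = 1 := by
  rw [Eser, Hser, ← Finset.prod_mul_distrib]
  exact Finset.prod_eq_one fun i _ => one_sub_mul_Gser _

lemma Eser_mul_Hser_insert {N : ℕ} (u : Fin N → ℂ) {s : Finset (Fin N)} {r : Fin N}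
    (hr : r ∉ s) : Eser u s * Hser u (insert r s) = Gser (u r) := by
  rw [Hser, Finset.prod_insert hr, ← Hser, mul_left_comm, Eser_mul_Hser, mul_one]

lemma coeff_Eser_eq_zero {N : ℕ} (u : Fin N → ℂ) (s : Finset (Fin N)) :
    ∀ m : ℕ, s.card < m → PowerSeries.coeff m (Eser u s) = 0 := by
  induction s using Finset.induction with
  | empty => intro m hm; rw [Eser, Finset.prod_empty, PowerSeries.coeff_one,
      if_neg (by omega)]
  | insert a s hr ih =>
    intro m hm
    rw [Finset.card_insert_of_notMem hr] at hm
    obtain ⟨m, rfl⟩ : ∃ m', m = m' + 1 := ⟨m - 1, by omega⟩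
    rw [Eser, Finset.prod_insert hr, ← Eser, sub_mul, one_mul, mul_assoc, map_sub,
      PowerSeries.coeff_C_mul, PowerSeries.coeff_succ_X_mul,
      ih _ (by omega), ih _ (by omega), mul_zero, sub_zero]

lemma coeff_Hser_univ (N : ℕ) (u : Fin N → ℂ) (n : ℕ) :
    PowerSeries.coeff n (Hser u Finset.univ) = hsym N u n := by
  rw [Hser, PowerSeries.coeff_prod, hsym, ← Finset.sum_filter]
  have key : ∀ l : Fin N →₀ ℕ, l ∈ Finset.univ.finsuppAntidiag n → ∀ i, l i ≤ n := by
    intro l hl i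
    rw [Finset.mem_finsuppAntidiag] at hl
    exact hl.1 ▸ Finset.single_le_sum (f := fun i => l i)
      (fun _ _ => Nat.zero_le _) (Finset.mem_univ i)
  refine Finset.sum_nbij' (fun l => fun i => (⟨min (l i) n, by omega⟩ : Fin (n+1)))
    (fun m => Finsupp.equivFunOnFinite.symm (fun i => (m i : ℕ))) ?_ ?_ ?_ ?_ ?_
  · intro l hl
    have hle := key l hl
    rw [Finset.mem_finsuppAntidiag] at hl
    rw [Finset.mem_filter]
    refine ⟨Finset.mem_univ _, ?_⟩
    simp only [min_eq_left (hle _)]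
    exact hl.1
  · intro m hm
    rw [Finset.mem_filter] at hm
    rw [Finset.mem_finsuppAntidiag]
    exact ⟨by simpa [Finsupp.coe_equivFunOnFinite_symm] using hm.2, Finset.subset_univ _⟩
  · intro l hl
    have hle := key l hl
    ext i
    simp [Finsupp.coe_equivFunOnFinite_symm, min_eq_left (hle i)]
  · intro m hm
    rw [Finset.mem_filter] at hm
    have hle : ∀ i, (m i : ℕ) ≤ n := by
      intro i
      calc (m i : ℕ) ≤ ∑ j, (m j : ℕ) :=
            Finset.single_le_sum (f := fun j => (m j : ℕ))
              (fun _ _ => Nat.zero_le _) (Finset.mem_univ i)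
        _ = n := hm.2
    funext i
    apply Fin.ext
    simp [Finsupp.coe_equivFunOnFinite_symm, min_eq_left (hle i)]
  · intro l hl
    have hle := key l hl
    refine Finset.prod_congr rfl fun i _ => ?_
    simp [Gser, min_eq_left (hle i)]

/-- exponents of the bialternant: `λ_j + (N-1-j)` -/
def aexp (N : ℕ) (lam : Fin N → ℕ) (j : Fin N) : ℕ := lam j + (N - 1 - (j : ℕ))

noncomputable def Emat (N : ℕ) (u : Fin N → ℂ) : Matrix (Fin N) (Fin N) ℂ :=
  Matrix.of fun r k => PowerSeries.coeff (N - 1 - (k : ℕ)) (Eser u (Finset.univ.erase r))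

noncomputable def HmatL (N : ℕ) (lam : Fin N → ℕ) (u : Fin N → ℂ) : Matrix (Fin N) (Fin N) ℂ :=
  Matrix.transpose (Matrix.of fun i j : Fin N => hsymZ N u ((lam i : ℤ) + (j : ℤ) - (i : ℤ)))

lemma det_HmatL (N : ℕ) (lam : Fin N → ℕ) (u : Fin N → ℂ) :
    (HmatL N lam u).det = schur N lam u := by
  rw [HmatL, Matrix.det_transpose, schur]

lemma Emat_mul_HmatL (N : ℕ) (lam : Fin N → ℕ) (u : Fin N → ℂ) :
    Emat N u * HmatL N lam u = Matrix.of fun i j => u i ^ (aexp N lam j) := by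
  ext r j
  have hN : 0 < N := r.pos
  set n : ℕ := aexp N lam j with hn
  clear_value n
  have hjle : (j : ℕ) ≤ N - 1 := by omega
  have hins : insert r (Finset.univ.erase r) = (Finset.univ : Finset (Fin N)) :=
    Finset.insert_erase (Finset.mem_univ r)
  have hG : (u r) ^ n = PowerSeries.coeff n
      (Eser u (Finset.univ.erase r) * Hser u Finset.univ) := by
    have h := Eser_mul_Hser_insert u (Finset.notMem_erase r Finset.univ)
    rw [hins] at h
    rw [h]; simp [Gser]
  have hcard : (Finset.univ.erase r).card = N - 1 := by
    rw [Finset.card_erase_of_mem (Finset.mem_univ r), Finset.card_univ, Fintype.card_fin]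
  have hEzero : ∀ m : ℕ, N - 1 < m → PowerSeries.coeff m (Eser u (Finset.univ.erase r)) = 0 := by
    intro m hm; exact coeff_Eser_eq_zero u _ m (by omega)
  set F : ℕ → ℂ := fun m => PowerSeries.coeff m (Eser u (Finset.univ.erase r)) *
      hsymZ N u ((n : ℤ) - m) with hF
  have big1 : ∑ m ∈ Finset.range (N + n + 1), F m = ∑ m ∈ Finset.range N, F m := by
    refine (Finset.sum_subset (by intro z hz; rw [Finset.mem_range] at *; omega) ?_).symm
    intro m _ hm
    rw [Finset.mem_range, not_lt] at hm
    rw [hF]; dsimp only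
    rw [hEzero m (by omega), zero_mul]
  have big2 : ∑ m ∈ Finset.range (N + n + 1), F m = ∑ m ∈ Finset.range (n + 1), F m := by
    refine (Finset.sum_subset (by intro z hz; rw [Finset.mem_range] at *; omega) ?_).symm
    intro m hmT hm
    rw [Finset.mem_range, not_lt] at hm
    rw [hF]; dsimp only
    rw [hsymZ, if_pos (by omega), mul_zero]
  have hR : (u r) ^ n = ∑ m ∈ Finset.range N, F m := by
    rw [hG, PowerSeries.coeff_mul, Finset.Nat.sum_antidiagonal_eq_sum_range_succ_mk,
      ← big1, big2]
    refine Finset.sum_congr rfl ?_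
    intro m hm
    rw [Finset.mem_range] at hm
    rw [hF]; dsimp only
    rw [coeff_Hser_univ, hsymZ, if_neg (by omega)]
    have : n - m = ((n:ℤ) - (m:ℤ)).toNat := by omega
    rw [this]
  rw [Matrix.mul_apply]
  simp only [Matrix.of_apply]
  rw [← hn]
  have hL : ∀ k : Fin N, Emat N u r (Fin.rev k) * HmatL N lam u (Fin.rev k) j = F (k : ℕ) := by
    intro k
    have hkle : (k : ℕ) ≤ N - 1 := by omega
    have h1 : (N - 1 - ((Fin.rev k : Fin N) : ℕ)) = (k : ℕ) := by
      rw [Fin.val_rev]; omega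
    have h2 : ((lam j : ℤ) + ((Fin.rev k : Fin N) : ℤ) - (j : ℤ)) = (n : ℤ) - (k : ℕ) := by
      have hv := Fin.val_rev k
      have : ((Fin.rev k : Fin N) : ℤ) = ((N : ℤ) - 1 - (k : ℕ)) := by omega
      rw [this, hn, aexp]
      push_cast [Nat.cast_sub hjle]
      omega
    rw [Emat, HmatL]
    simp only [Matrix.of_apply, Matrix.transpose_apply]
    rw [h1, h2, hF]
  calc (∑ k : Fin N, Emat N u r k * HmatL N lam u k j)
      = ∑ k : Fin N, Emat N u r (Fin.rev k) * HmatL N lam u (Fin.rev k) j :=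
        (Fintype.sum_equiv Fin.revPerm
          (fun k => Emat N u r (Fin.rev k) * HmatL N lam u (Fin.rev k) j)
          (fun k => Emat N u r k * HmatL N lam u k j) (fun k => rfl)).symm
    _ = ∑ k : Fin N, F (k : ℕ) := Finset.sum_congr rfl (fun k _ => hL k)
    _ = ∑ m ∈ Finset.range N, F m := Fin.sum_univ_eq_sum_range F N
    _ = u r ^ n := hR.symm

lemma hsym_zero (N : ℕ) (u : Fin N → ℂ) : hsym N u 0 = 1 := by
  rw [hsym, Finset.sum_eq_single (fun _ => (0 : Fin 1))]
  · simp
  · intro m _ hm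
    exact absurd (funext fun i => Subsingleton.elim _ _) hm
  · intro h
    exact absurd (Finset.mem_univ _) h

lemma schur_zero (N : ℕ) (u : Fin N → ℂ) : schur N (fun _ => 0) u = 1 := by
  rw [schur, Matrix.det_of_upperTriangular]
  · rw [Finset.prod_eq_one]
    intro i _
    simp only [Matrix.of_apply]
    rw [hsymZ, if_neg (by omega)]
    simpa using hsym_zero N u
  · intro i j hij
    simp only [Matrix.of_apply]
    rw [hsymZ, if_pos]
    simp only [id] at hij
    have : (j : ℕ) < (i : ℕ) := hij
    push_cast
    omega

lemma pairform {N : ℕ} (f : Fin N → Fin N → ℂ) :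
    ∏ p ∈ Finset.univ.filter (fun p : Fin N × Fin N => p.1 < p.2), f p.1 p.2
      = ∏ i : Fin N, ∏ j ∈ Finset.Ioi i, f i j := by
  have hset : Finset.univ.filter (fun p : Fin N × Fin N => p.1 < p.2)
      = Finset.univ.biUnion (fun i => {i} ×ˢ Finset.Ioi i) := by
    ext p
    simp only [Finset.mem_filter, Finset.mem_univ, true_and, Finset.mem_biUnion,
      Finset.mem_product, Finset.mem_singleton, Finset.mem_Ioi, Finset.singleton_product,
      Finset.mem_map, Function.Embedding.coeFn_mk, Prod.ext_iff]
    constructor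
    · intro h
      exact ⟨p.1, p.2, h, rfl, rfl⟩
    · rintro ⟨a, b, h, h1, h2⟩
      rw [← h1, ← h2]
      exact h
  have hdisj : (↑(Finset.univ : Finset (Fin N)) : Set (Fin N)).PairwiseDisjoint
      (fun i => {i} ×ˢ Finset.Ioi i) := by
    intro a _ b _ hab
    simp only [Finset.disjoint_left]
    rintro p hp hq
    rw [Finset.mem_product, Finset.mem_singleton] at hp hq
    exact hab (hp.1.symm.trans hq.1)
  rw [hset, Finset.prod_biUnion hdisj]
  refine Finset.prod_congr rfl fun i _ => ?_
  rw [Finset.prod_product, Finset.prod_singleton]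

lemma det_pow_rev (N : ℕ) (u : Fin N → ℂ) :
    Matrix.det (Matrix.of fun i j : Fin N => u i ^ (N - 1 - (j : ℕ))) = vand N u := by
  have h1 : (Matrix.of fun i j : Fin N => u i ^ (N - 1 - (j : ℕ))) =
      (Matrix.vandermonde (fun i => u (Fin.rev i))).submatrix Fin.revPerm Fin.revPerm := by
    ext i j
    simp only [Matrix.of_apply, Matrix.submatrix_apply, Matrix.vandermonde_apply,
      Fin.revPerm_apply, Fin.rev_rev]
    congr 1
    rw [Fin.val_rev]
    omega
  rw [h1, Matrix.det_submatrix_equiv_self, Matrix.det_vandermonde]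
  have h2 : ∀ i : Fin N, ∀ j ∈ Finset.Ioi i,
      u (Fin.rev j) - u (Fin.rev i) = (fun a b : Fin N => u (Fin.rev b) - u (Fin.rev a)) i j :=
    fun _ _ _ => rfl
  rw [← pairform (fun a b => u (Fin.rev b) - u (Fin.rev a)), vand]
  refine Finset.prod_nbij' (fun p => (Fin.rev p.2, Fin.rev p.1))
    (fun p => (Fin.rev p.2, Fin.rev p.1)) ?_ ?_ ?_ ?_ ?_
  · intro p hp
    rw [Finset.mem_filter] at hp ⊢
    exact ⟨Finset.mem_univ _, by simpa [Fin.rev_lt_rev] using hp.2⟩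
  · intro p hp
    rw [Finset.mem_filter] at hp ⊢
    exact ⟨Finset.mem_univ _, by simpa [Fin.rev_lt_rev] using hp.2⟩
  · intro p _; simp [Fin.rev_rev]
  · intro p _; simp [Fin.rev_rev]
  · intro p _; simp [Fin.rev_rev]

lemma bialt (N : ℕ) (lam : Fin N → ℕ) (u : Fin N → ℂ) :
    Matrix.det (Matrix.of fun i j : Fin N => u i ^ (aexp N lam j))
      = vand N u * schur N lam u := by
  have hE : (Emat N u).det = vand N u := by
    have h0 := Emat_mul_HmatL N (fun _ => 0) u
    have h1 : (Emat N u).det * (HmatL N (fun _ => 0) u).det = vand N u := by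
      rw [← Matrix.det_mul, h0]
      have : (fun i j : Fin N => u i ^ (aexp N (fun _ => 0) j))
          = fun i j : Fin N => u i ^ (N - 1 - (j : ℕ)) := by
        funext i j; rw [aexp]; norm_num
      rw [this]
      exact det_pow_rev N u
    rwa [det_HmatL, schur_zero, mul_one] at h1
  rw [← Emat_mul_HmatL, Matrix.det_mul, hE, det_HmatL]

lemma euler_step {N : ℕ} {ι : Type*} [DecidableEq ι] (F : Finset ι) (g : ι → ℂ)
    (a : ι → Fin N → ℕ) (j : Fin N) :
    eulerOp N j (fun u => ∑ s ∈ F, g s * ∏ i, u i ^ a s i)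
      = fun u => ∑ s ∈ F, ((a s j : ℂ) * g s) * ∏ i, u i ^ a s i := by
  funext u
  rw [eulerOp]
  have hfun : (fun t : ℂ => ∑ s ∈ F, g s * ∏ i, (Function.update u j t) i ^ a s i)
      = fun t : ℂ => ∑ s ∈ F,
          (g s * ∏ i ∈ Finset.univ.erase j, u i ^ a s i) * t ^ a s j := by
    funext t
    refine Finset.sum_congr rfl fun s _ => ?_
    rw [← Finset.mul_prod_erase Finset.univ _ (Finset.mem_univ j)]
    have h1 : Function.update u j t j = t := Function.update_self j t u
    have h2 : ∏ i ∈ Finset.univ.erase j, (Function.update u j t) i ^ a s i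
        = ∏ i ∈ Finset.univ.erase j, u i ^ a s i :=
      Finset.prod_congr rfl fun i hi => by
        rw [Function.update_of_ne (Finset.ne_of_mem_erase hi)]
    rw [h1, h2]; ring
  rw [hfun]
  have hderiv : deriv (fun t : ℂ => ∑ s ∈ F,
        (g s * ∏ i ∈ Finset.univ.erase j, u i ^ a s i) * t ^ a s j) (u j)
      = ∑ s ∈ F, (g s * ∏ i ∈ Finset.univ.erase j, u i ^ a s i) *
          ((a s j : ℂ) * u j ^ (a s j - 1)) :=
    HasDerivAt.deriv (HasDerivAt.fun_sum fun s _ =>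
      ((hasDerivAt_pow (a s j) (u j)).const_mul _))
  rw [hderiv, Finset.mul_sum]
  refine Finset.sum_congr rfl fun s _ => ?_
  have hprod : ∏ i, u i ^ a s i
      = u j ^ a s j * ∏ i ∈ Finset.univ.erase j, u i ^ a s i :=
    (Finset.mul_prod_erase Finset.univ _ (Finset.mem_univ j)).symm
  rw [hprod]
  rcases Nat.eq_zero_or_pos (a s j) with h0 | hpos
  · rw [h0]; push_cast; ring
  · have he : a s j = (a s j - 1) + 1 := by omega
    have hq : u j ^ a s j = u j * u j ^ (a s j - 1) := by
      conv_lhs => rw [he, pow_succ]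
      exact mul_comm _ _
    rw [hq]; ring

lemma euler_iter {N : ℕ} {ι : Type*} [DecidableEq ι] (F : Finset ι)
    (a : ι → Fin N → ℕ) (j : Fin N) (k : ℕ) (g : ι → ℂ) :
    (eulerOp N j)^[k] (fun u => ∑ s ∈ F, g s * ∏ i, u i ^ a s i)
      = fun u => ∑ s ∈ F, ((a s j : ℂ) ^ k * g s) * ∏ i, u i ^ a s i := by
  induction k generalizing g with
  | zero =>
    rw [Function.iterate_zero_apply]
    funext u
    exact Finset.sum_congr rfl fun s _ => by rw [pow_zero, one_mul]
  | succ k ih =>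
    rw [Function.iterate_succ_apply', ih, euler_step]
    funext u
    exact Finset.sum_congr rfl fun s _ => by ring

lemma vand_ne_zero {N : ℕ} {x : Fin N → ℂ} (hxinj : Function.Injective x) :
    vand N x ≠ 0 := by
  rw [vand, Finset.prod_ne_zero_iff]
  intro p hp
  rw [Finset.mem_filter] at hp
  exact sub_ne_zero_of_ne (fun h => absurd (hxinj h) (ne_of_lt hp.2))

lemma vand_mul_schur (N : ℕ) (lam : Fin N → ℕ) (u : Fin N → ℂ) :
    vand N u * schur N lam u
      = ∑ σ : Equiv.Perm (Fin N), ((Equiv.Perm.sign σ : ℤ) : ℂ) *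
          ∏ i, u i ^ (aexp N lam (σ i)) := by
  rw [← bialt, ← Matrix.det_transpose, Matrix.det_apply']
  refine Finset.sum_congr rfl fun σ _ => rfl

lemma keystep (N k : ℕ) (S : Finset (Fin N → ℕ)) (g : (Fin N → ℕ) → ℂ) (u : Fin N → ℂ) :
    ∑ j : Fin N, (eulerOp N j)^[k]
        (fun v => vand N v * ∑ lam ∈ S, g lam * schur N lam v) u
      = vand N u * ∑ lam ∈ S,
          (((∑ i : Fin N, (aexp N lam i)^k : ℕ) : ℂ) * g lam) * schur N lam u := by
  have hrw : ∀ (h : (Fin N → ℕ) → ℂ),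
      (fun v => vand N v * ∑ lam ∈ S, h lam * schur N lam v)
      = fun v => ∑ p ∈ S ×ˢ (Finset.univ : Finset (Equiv.Perm (Fin N))),
          (h p.1 * ((Equiv.Perm.sign p.2 : ℤ) : ℂ)) * ∏ i, v i ^ (aexp N p.1 (p.2 i)) := by
    intro h
    funext v
    rw [Finset.mul_sum, Finset.sum_product]
    refine Finset.sum_congr rfl fun lam _ => ?_
    have h1 : vand N v * (h lam * schur N lam v)
        = h lam * (vand N v * schur N lam v) := by ring
    rw [h1, vand_mul_schur, Finset.mul_sum]
    exact Finset.sum_congr rfl fun σ _ => by ring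
  rw [hrw]
  have hiter : ∀ j : Fin N,
      (eulerOp N j)^[k] (fun v => ∑ p ∈ S ×ˢ (Finset.univ : Finset (Equiv.Perm (Fin N))),
          (g p.1 * ((Equiv.Perm.sign p.2 : ℤ) : ℂ)) * ∏ i, v i ^ (aexp N p.1 (p.2 i))) u
      = ∑ p ∈ S ×ˢ (Finset.univ : Finset (Equiv.Perm (Fin N))),
          ((aexp N p.1 (p.2 j) : ℂ)^k * (g p.1 * ((Equiv.Perm.sign p.2 : ℤ) : ℂ))) *
            ∏ i, u i ^ (aexp N p.1 (p.2 i)) := by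
    intro j
    exact congrFun (euler_iter (S ×ˢ (Finset.univ : Finset (Equiv.Perm (Fin N))))
      (fun (p : (Fin N → ℕ) × Equiv.Perm (Fin N)) (i : Fin N) => aexp N p.1 (p.2 i)) j k
      (fun (p : (Fin N → ℕ) × Equiv.Perm (Fin N)) =>
        g p.1 * ((Equiv.Perm.sign p.2 : ℤ) : ℂ))) u
  rw [Finset.sum_congr rfl (fun j _ => hiter j), Finset.sum_comm,
    congrFun (hrw (fun lam => ((∑ i : Fin N, (aexp N lam i)^k : ℕ) : ℂ) * g lam)) u]
  refine Finset.sum_congr rfl fun p _ => ?_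
  have hc : ∑ j : Fin N, ((aexp N p.1 (p.2 j) : ℂ))^k
      = ((∑ i : Fin N, (aexp N p.1 i)^k : ℕ) : ℂ) := by
    rw [Nat.cast_sum]
    push_cast
    exact Equiv.sum_comp p.2 (fun i => ((aexp N p.1 i : ℂ))^k)
  rw [← Finset.sum_mul, ← Finset.sum_mul, hc]
  ring

/-- applying `D_k` (with Vandermonde conjugation) `l` times to the Schur
generating function of `ρ` and evaluating at `u = x` yields the moment
`E_ρ[(Σ_{i=1}^N (λ_i + N − i)^k)^l]`. -/
theorem Dop_iterate_SGF_eval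
    (N k l : ℕ) (hk : 0 < k) (hl : 0 < l)
    (S : Finset (Fin N → ℕ)) (ρ : (Fin N → ℕ) → ℝ)
    (hρ : ∀ lam ∈ S, 0 ≤ ρ lam) (hρ1 : ∑ lam ∈ S, ρ lam = 1)
    (hanti : ∀ lam ∈ S, Antitone lam)
    (x : Fin N → ℂ) (hx0 : ∀ i, x i ≠ 0) (hxinj : Function.Injective x)
    (hsx : ∀ lam ∈ S, schur N lam x ≠ 0) :
    (Dop N k)^[l] (SGF N S ρ x) x
      = ∑ lam ∈ S, (ρ lam : ℂ) *
          ((∑ i : Fin N, ((lam i + (N - 1 - (i : ℕ)))^k : ℕ) : ℂ))^l := by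
  have hvx : vand N x ≠ 0 := vand_ne_zero hxinj
  have claim : ∀ l : ℕ, ∀ u : Fin N → ℂ, vand N u ≠ 0 →
      (Dop N k)^[l] (SGF N S ρ x) u
        = ∑ lam ∈ S, (((ρ lam : ℂ) / schur N lam x) *
            (((∑ i : Fin N, (aexp N lam i)^k : ℕ) : ℂ))^l) * schur N lam u := by
    intro l
    induction l with
    | zero =>
      intro u hu
      rw [Function.iterate_zero_apply, SGF]
      exact Finset.sum_congr rfl fun lam _ => by rw [pow_zero]; ring
    | succ l ih =>
      intro u hu
      rw [Function.iterate_succ_apply', Dop]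
      have hfun : (fun v => vand N v * (Dop N k)^[l] (SGF N S ρ x) v)
          = fun v => vand N v * ∑ lam ∈ S,
              (((ρ lam : ℂ) / schur N lam x) *
                (((∑ i : Fin N, (aexp N lam i)^k : ℕ) : ℂ))^l) * schur N lam v := by
        funext v
        by_cases hv : vand N v = 0
        · rw [hv, zero_mul, zero_mul]
        · rw [ih v hv]
      rw [hfun, keystep, inv_mul_cancel_left₀ hu]
      exact Finset.sum_congr rfl fun lam _ => by ring
  rw [claim l x hvx]
  refine Finset.sum_congr rfl fun lam hlam => ?_
  have hs := hsx lam hlam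
  have haexp : (∑ i : Fin N, (aexp N lam i)^k)
      = ∑ i : Fin N, ((lam i + (N - 1 - (i : ℕ)))^k : ℕ) := rfl
  rw [haexp]
  field_simp
  rw [Nat.cast_sum]
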